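/- For all integers n ≥ 0 and k ≥ 1: s_{n+f_{2k+1}} ≠ s_n if and only if Φ_k(n) ∈ {f_{2k+3}/2, f_{2k+3}/2 − 1, f_{2k+3}/2 + f_{2k}, f_{2k+3}/2 + f_{2k} − 1}. -/

import Mathlib

/-- The substitution τ: 1 → 101, 0 → 1 on the alphabet {0,1}. -/
def tau (b : ℕ) : List ℕ := if b = 1 then [1, 0, 1] else [1]

/-- The iterated word τ^n(1). -/
def tauIter : ℕ → List ℕ
  | 0 => [1]
  | n + 1 => ((tauIter n).map tau).flatten

/-- `s` is the fixed point of τ beginning with 1: it agrees with every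
iterate `τ^n(1)` on its length. -/
def IsFixedSeq (s : ℕ → ℕ) : Prop :=
  ∀ n j, j < (tauIter n).length → s j = (tauIter n).getD j 0

/-- The sequence (f_n): f_0 = 1, f_1 = 2, f_{2n+2} = f_{2n} + f_{2n+1},
f_{2n+3} = f_{2n} + f_{2n+2}. -/
def IsFSeq (f : ℕ → ℕ) : Prop :=
  f 0 = 1 ∧ f 1 = 2 ∧ (∀ n, f (2*n+2) = f (2*n) + f (2*n+1)) ∧
    (∀ n, f (2*n+3) = f (2*n) + f (2*n+2))

/-- `a` is the f-representation of `n`: digits in {0,1}, finitely supported,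
a_i a_{i+1} = 0 for all i, a_i a_{i+2} = 0 for even i, and n = Σ a_i f_i. -/
def IsFRep (f : ℕ → ℕ) (n : ℕ) (a : ℕ → ℕ) : Prop :=
  (∀ i, a i ≤ 1) ∧ (∀ i, a i * a (i+1) = 0) ∧
  (∀ i, Even i → a i * a (i+2) = 0) ∧
  ∃ N, (∀ i, N ≤ i → a i = 0) ∧ n = ∑ i ∈ Finset.range N, a i * f i

/-- The truncated f-representation Φ_k(n) = Σ_{i=0}^{2k+2} a_i(n) f_i. -/
def Phi (f : ℕ → ℕ) (a : ℕ → ℕ → ℕ) (k n : ℕ) : ℕ :=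
  ∑ i ∈ Finset.range (2*k+3), a n i * f i

/-- The Hankel determinant H_{m,n} = det (s_{m+i+j})_{0 ≤ i,j ≤ n-1}. -/
def H (s : ℕ → ℕ) (m n : ℕ) : ℤ :=
  (Matrix.of fun i j : Fin n => (s (m + i.1 + j.1) : ℤ)).det

namespace Aux


def g : ℕ → ℕ × ℕ
  | 0 => (1, 2)
  | i + 1 => ((g i).1 + (g i).2, 2 * (g i).1 + (g i).2)

def F (n : ℕ) : ℕ := if n % 2 = 0 then (g (n / 2)).1 else (g (n / 2)).2

lemma F_even (n : ℕ) : F (2 * n) = (g n).1 := by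
  simp [F, Nat.mul_mod_right, Nat.mul_div_cancel_left _ (by norm_num : 0 < 2)]

lemma F_odd (n : ℕ) : F (2 * n + 1) = (g n).2 := by
  have h1 : (2 * n + 1) % 2 = 1 := by omega
  have h2 : (2 * n + 1) / 2 = n := by omega
  simp [F, h1, h2]

lemma Fe (n : ℕ) : F (2 * n + 2) = F (2 * n) + F (2 * n + 1) := by
  have : 2 * n + 2 = 2 * (n + 1) := by ring
  rw [this, F_even, F_even, F_odd]; rfl

lemma Fo (n : ℕ) : F (2 * n + 3) = F (2 * n) + F (2 * n + 2) := by
  have h : 2 * n + 3 = 2 * (n + 1) + 1 := by ring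
  have h2 : 2 * n + 2 = 2 * (n + 1) := by ring
  rw [h, h2, F_odd, F_even, F_even]
  show 2 * (g n).1 + (g n).2 = (g n).1 + ((g n).1 + (g n).2); ring

lemma g_pos (n : ℕ) : 1 ≤ (g n).1 ∧ 1 ≤ (g n).2 := by
  induction n with
  | zero => exact ⟨by decide, by decide⟩
  | succ i ih => exact ⟨by simp [g]; omega, by simp [g]; omega⟩

lemma F_pos (n : ℕ) : 1 ≤ F n := by
  rcases Nat.even_or_odd' n with ⟨m, rfl | rfl⟩
  · rw [F_even]; exact (g_pos m).1
  · rw [F_odd]; exact (g_pos m).2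

lemma F_lt_succ (n : ℕ) : F n < F (n + 1) := by
  rcases Nat.even_or_odd' n with ⟨m, rfl | rfl⟩
  · -- F (2m) < F (2m+1)
    induction m with
    | zero => decide
    | succ i _ =>
      have h := F_pos (2 * i)
      rw [show (2*(i+1)+1) = 2*i+3 by ring, show (2*(i+1)) = 2*i+2 by ring, Fo i]
      omega
  · have : 2 * m + 1 + 1 = 2 * m + 2 := by ring
    rw [this, Fe m]
    have := F_pos (2 * m); omega

lemma F_strictMono : StrictMono F := strictMono_nat_of_lt_succ F_lt_succ

lemma F_ge (n : ℕ) : n + 1 ≤ F n := by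
  induction n with
  | zero => decide
  | succ i ih => have := F_lt_succ i; omega

def D : ℕ → ℕ
  | 0 => 1
  | j + 1 => F (2 * j) + D j

lemma D_pos (j : ℕ) : 1 ≤ D j := by
  cases j with
  | zero => decide
  | succ i => have := F_pos (2 * i); simp [D]; omega

lemma two_D (j : ℕ) : 2 * D j = F (2 * j + 1) := by
  induction j with
  | zero => decide
  | succ i ih =>
    have h1 : 2 * (i + 1) + 1 = 2 * i + 3 := by ring
    have h2 : 2 * (i + 1) = 2 * i + 2 := by ring
    rw [h1, Fo i, Fe i, D]; omega

lemma D_le_F (j : ℕ) : D j ≤ F (2 * j) := by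
  induction j with
  | zero => decide
  | succ i ih =>
    have h2 : 2 * (i + 1) = 2 * i + 2 := by ring
    have := F_lt_succ (2 * i)
    rw [h2, Fe i, D]; omega

lemma D_lt_F (j : ℕ) : D j < F (2 * j + 1) := by
  have := two_D j; have := D_pos j; omega

lemma D_add_one_le (j : ℕ) (hj : 1 ≤ j) : D j + 1 ≤ F (2 * j) := by
  induction j with
  | zero => omega
  | succ i ih =>
    have h2 : 2 * (i + 1) = 2 * i + 2 := by ring
    have hd : D i ≤ F (2 * i) := D_le_F i
    have := F_lt_succ (2 * i)
    rw [h2, Fe i, D]; omega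

lemma D_mono : Monotone D := by
  apply monotone_nat_of_le_succ
  intro n; show D n ≤ F (2 * n) + D n; omega


-- small values
lemma F1 : F 1 = 2 := by decide
lemma F4 : F 4 = 7 := by decide
lemma F6 : F 6 = 17 := by decide
lemma F0' : F 0 = 1 := by decide
lemma F2' : F 2 = 3 := by decide

lemma tauW_append (u v : List ℕ) :
    (((u ++ v).map tau).flatten) = ((u.map tau).flatten) ++ ((v.map tau).flatten) := by
  simp

lemma Wsucc (m : ℕ) : tauIter (m + 2) = tauIter (m + 1) ++ tauIter m ++ tauIter (m + 1) := by
  induction m with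
  | zero => decide
  | succ i ih =>
    have h : tauIter (i + 3) = ((tauIter (i + 2)).map tau).flatten := rfl
    conv_lhs => rw [h, ih, tauW_append, tauW_append]
    rfl

lemma Wlen_pair (m : ℕ) :
    (tauIter m).length = F (2 * m) ∧ (tauIter (m + 1)).length = F (2 * (m + 1)) := by
  induction m with
  | zero => exact ⟨by decide, by decide⟩
  | succ i ih =>
    obtain ⟨h1, h2⟩ := ih
    refine ⟨h2, ?_⟩
    rw [Wsucc i]
    simp only [List.length_append, h1, h2]
    have ha : F (2 * (i + 1 + 1)) = F (2 * (i + 1)) + F (2 * i + 3) := by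
      rw [show 2 * (i + 1 + 1) = 2 * (i + 1) + 2 by ring, Fe (i + 1),
        show 2 * (i + 1) + 1 = 2 * i + 3 by ring]
    have hb := Fo i
    have hc : 2 * (i + 1) = 2 * i + 2 := by ring
    rw [ha, hc] at *
    omega

lemma Wlen (m : ℕ) : (tauIter m).length = F (2 * m) := (Wlen_pair m).1

lemma Wlen' (m : ℕ) : (tauIter (m + 1)).length = F (2 * m + 2) := by
  rw [Wlen, show 2 * (m + 1) = 2 * m + 2 by ring]

lemma Wprefix (m : ℕ) : tauIter m <+: tauIter (m + 1) := by
  cases m with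
  | zero => decide
  | succ i => exact ⟨tauIter i ++ tauIter (i + 1), by rw [Wsucc i]; simp⟩

lemma Wprefix_le {m m' : ℕ} (h : m ≤ m') : tauIter m <+: tauIter m' := by
  induction m' with
  | zero => cases Nat.le_zero.mp h; exact List.prefix_refl _
  | succ i ih =>
    rcases Nat.lt_or_ge m (i + 1) with h' | h'
    · exact (ih (by omega)).trans (Wprefix i)
    · have : m = i + 1 := by omega
      subst this; exact List.prefix_refl _

def S (n : ℕ) : ℕ := (tauIter (n + 1)).getD n 0

lemma getD_prefix {u v : List ℕ} (h : u <+: v) {n : ℕ} (hn : n < u.length) :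
    v.getD n 0 = u.getD n 0 := by
  obtain ⟨t, rfl⟩ := h
  rw [List.getD_append _ _ _ _ hn]

lemma S_eq (m n : ℕ) (h : n < F (2 * m)) : S n = (tauIter m).getD n 0 := by
  have hn1 : n < (tauIter (n + 1)).length := by
    rw [Wlen]; have := F_ge (2 * (n + 1)); omega
  rcases le_or_gt m (n + 1) with h' | h'
  · have hp := Wprefix_le h'
    rw [S, getD_prefix hp (by rw [Wlen]; exact h)]
  · have hp := Wprefix_le (Nat.le_of_lt h')
    rw [S, ← getD_prefix hp hn1]

lemma F_bigstep (m : ℕ) : F (2 * m + 4) = F (2 * m + 2) + F (2 * m) + F (2 * m + 2) := by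
  have h1 : F (2 * m + 4) = F (2 * m + 2) + F (2 * m + 3) := by
    rw [show 2 * m + 4 = 2 * (m + 1) + 2 by ring, Fe (m + 1),
      show 2 * (m + 1) + 1 = 2 * m + 3 by ring, show 2 * (m + 1) = 2 * m + 2 by ring]
  have h2 := Fo m
  omega

lemma SL1 (m z : ℕ) (hz : z < F (2 * m)) : S (F (2 * m + 2) + z) = S z := by
  have hbig := F_bigstep m
  have hlt : F (2 * m + 2) + z < F (2 * (m + 2)) := by
    rw [show 2 * (m + 2) = 2 * m + 4 by ring]; omega
  rw [S_eq (m + 2) _ hlt, S_eq m z hz, Wsucc m]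
  have l1 : (tauIter (m + 1)).length = F (2 * m + 2) := Wlen' m
  have l2 : (tauIter m).length = F (2 * m) := Wlen m
  rw [List.getD_append _ _ _ _ (by simp [List.length_append, l1, l2]; omega)]
  rw [List.getD_append_right _ _ _ _ (by omega : (tauIter (m+1)).length ≤ F (2 * m + 2) + z)]
  rw [l1]
  congr 1
  omega

lemma SL2 (m z : ℕ) (hz : z < F (2 * m + 2)) : S (F (2 * m + 3) + z) = S z := by
  have hbig := F_bigstep m
  have h2 := Fo m
  have hlt : F (2 * m + 3) + z < F (2 * (m + 2)) := by
    rw [show 2 * (m + 2) = 2 * m + 4 by ring]; omega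
  rw [S_eq (m + 2) _ hlt, S_eq (m + 1) z (by rw [show 2*(m+1) = 2*m+2 by ring]; exact hz), Wsucc m]
  have l1 : (tauIter (m + 1)).length = F (2 * m + 2) := Wlen' m
  have l2 : (tauIter m).length = F (2 * m) := Wlen m
  rw [List.getD_append_right _ _ _ _ (by simp only [List.length_append, l1, l2]; omega)]
  congr 1
  simp only [List.length_append, l1, l2]
  omega

lemma Ssmall (n : ℕ) (h : n < 17) :
    S n = [1,0,1,1,1,0,1,1,0,1,1,0,1,1,1,0,1].getD n 0 := by
  have h6 : n < F (2 * 3) := by rw [show 2*3 = 6 by norm_num, F6]; omega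
  rw [S_eq 3 n h6]
  have ht : tauIter 3 = [1,0,1,1,1,0,1,1,0,1,1,0,1,1,1,0,1] := by decide
  rw [ht]

lemma SL2' (m z : ℕ) (hz : z < F (2 * m)) : S (F (2 * m + 1) + z) = S z := by
  cases m with
  | zero =>
    rw [show 2*0 = 0 by norm_num, F0'] at hz
    have : z = 0 := by omega
    subst this
    rw [show 2*0+1 = 1 by norm_num, F1, show (2+0) = 2 by norm_num]
    rw [Ssmall 2 (by omega), Ssmall 0 (by omega)]
    decide
  | succ i =>
    rw [show 2 * (i + 1) + 1 = 2 * i + 3 by ring]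
    exact SL2 i z (by rw [show 2 * (i + 1) = 2 * i + 2 by ring] at hz; exact hz)


lemma Strip_even : ∀ m x, x + 2 ≤ D (m + 1) → S (F (2 * m + 2) + x) = S x := by
  intro m
  induction m with
  | zero =>
    intro x hx
    have h1 : D 1 = 2 := by decide
    have h0 : F 0 = 1 := F0'
    rw [h1] at hx
    have : x = 0 := by omega
    subst this
    exact SL1 0 0 (by rw [show 2*0 = 0 by ring, h0]; omega)
  | succ i ih =>
    intro x hx
    have hD1 : D (i + 1 + 1) = F (2 * (i + 1)) + D (i + 1) := rfl
    have hDi : D (i + 1) = F (2 * i) + D i := rfl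
    have hle : D (i + 1) ≤ F (2 * (i + 1)) := D_le_F (i + 1)
    rcases lt_or_ge x (F (2 * (i + 1))) with hlt | hge
    · exact SL1 (i + 1) x hlt
    · obtain ⟨y, rfl⟩ := Nat.exists_eq_add_of_le hge
      have hy : y + 2 ≤ D (i + 1) := by omega
      have hFo : F (2 * (i + 1) + 3) = F (2 * (i + 1)) + F (2 * (i + 1) + 2) := Fo (i + 1)
      have hFe2 : F (2 * (i + 1) + 2) = F (2 * (i + 1)) + F (2 * (i + 1) + 1) := Fe (i + 1)
      have e : F (2 * (i + 1) + 2) + (F (2 * (i + 1)) + y) = F (2 * (i + 1) + 3) + y := by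
        omega
      rw [e, SL2 (i + 1) y (by omega)]
      have hx2 : S (F (2 * (i + 1)) + y) = S y := by
        have := ih y hy
        rwa [show 2 * i + 2 = 2 * (i + 1) by ring] at this
      exact hx2.symm

lemma Strip_odd : ∀ m x, x + 2 ≤ D (m + 1) → S (F (2 * m + 1) + x) = S x := by
  intro m x hx
  have hDm : D (m + 1) = F (2 * m) + D m := rfl
  have hle : D m ≤ F (2 * m) := D_le_F m
  rcases lt_or_ge x (F (2 * m)) with hlt | hge
  · exact SL2' m x hlt
  · obtain ⟨y, rfl⟩ := Nat.exists_eq_add_of_le hge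
    have hy : y + 2 ≤ D m := by omega
    have hFe : F (2 * m + 2) = F (2 * m) + F (2 * m + 1) := Fe m
    have e : F (2 * m + 1) + (F (2 * m) + y) = F (2 * m + 2) + y := by omega
    rw [e, SL1 m y (by omega)]
    cases m with
    | zero => have hd0 : D 0 = 1 := rfl; omega
    | succ i =>
      have h2 := Strip_even i y hy
      rw [show 2 * i + 2 = 2 * (i + 1) by ring] at h2
      exact h2.symm

lemma Zlem : ∀ j u, u < F (2 * j + 2) → (S (u + F (2 * j)) ≠ S u ↔ u + 1 = D j ∨ u = D j) := by
  intro j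
  induction j using Nat.strong_induction_on with
  | _ j ihs =>
  match j with
  | 0 =>
    intro u hu
    have h2 : F (2 * 0 + 2) = 3 := by decide
    have h0 : F (2 * 0) = 1 := by decide
    have hd : D 0 = 1 := rfl
    rw [h2] at hu
    rw [h0, hd]
    interval_cases u <;>
      rw [Ssmall _ (by omega), Ssmall _ (by omega)] <;> decide
  | 1 =>
    intro u hu
    have h2 : F (2 * 1 + 2) = 7 := by decide
    have h0 : F (2 * 1) = 3 := by decide
    have hd : D 1 = 2 := by decide
    rw [h2] at hu
    rw [h0, hd]
    interval_cases u <;>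
      rw [Ssmall _ (by omega), Ssmall _ (by omega)] <;> decide
  | (j + 2) =>
    have ihj := ihs j (by omega)
    intro u hu
    rw [show 2 * (j + 2) + 2 = 2 * j + 6 by ring] at hu
    rw [show 2 * (j + 2) = 2 * j + 4 by ring]
    have hD : D (j + 2) = F (2 * j + 3) + D j := by
      show F (2 * (j + 1)) + (F (2 * j) + D j) = _
      rw [Fo j, show 2 * (j + 1) = 2 * j + 2 by ring]; ring
    have h23 : F (2 * j + 2) = F (2 * j) + F (2 * j + 1) := Fe j
    have h3 : F (2 * j + 3) = F (2 * j) + F (2 * j + 2) := Fo j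
    have h4 : F (2 * j + 4) = F (2 * j + 2) + F (2 * j + 3) := by
      have := Fe (j + 1)
      rwa [show 2 * (j + 1) + 2 = 2 * j + 4 by ring, show 2 * (j + 1) + 1 = 2 * j + 3 by ring,
        show 2 * (j + 1) = 2 * j + 2 by ring] at this
    have h5 : F (2 * j + 5) = F (2 * j + 2) + F (2 * j + 4) := by
      have := Fo (j + 1)
      rwa [show 2 * (j + 1) + 3 = 2 * j + 5 by ring, show 2 * (j + 1) + 2 = 2 * j + 4 by ring,
        show 2 * (j + 1) = 2 * j + 2 by ring] at this
    have h6 : F (2 * j + 6) = F (2 * j + 4) + F (2 * j + 5) := by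
      have := Fe (j + 2)
      rwa [show 2 * (j + 2) + 2 = 2 * j + 6 by ring, show 2 * (j + 2) + 1 = 2 * j + 5 by ring,
        show 2 * (j + 2) = 2 * j + 4 by ring] at this
    have hdp := D_pos j
    have hdlt := D_lt_F j
    have hp0 := F_pos (2 * j)
    have hp1 := F_pos (2 * j + 1)
    have hp2 := F_pos (2 * j + 2)
    have hp4 := F_pos (2 * j + 4)
    have SL1j1 : ∀ z, z < F (2 * j + 2) → S (F (2 * j + 4) + z) = S z := by
      intro z hz
      have := SL1 (j + 1) z (by rwa [show 2 * (j + 1) = 2 * j + 2 by ring])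
      rwa [show 2 * (j + 1) + 2 = 2 * j + 4 by ring] at this
    have SL2j1 : ∀ z, z < F (2 * j + 4) → S (F (2 * j + 5) + z) = S z := by
      intro z hz
      have := SL2 (j + 1) z (by rwa [show 2 * (j + 1) + 2 = 2 * j + 4 by ring])
      rwa [show 2 * (j + 1) + 3 = 2 * j + 5 by ring] at this
    have SL1j2 : ∀ z, z < F (2 * j + 4) → S (F (2 * j + 6) + z) = S z := by
      intro z hz
      have := SL1 (j + 2) z (by rwa [show 2 * (j + 2) = 2 * j + 4 by ring])
      rwa [show 2 * (j + 2) + 2 = 2 * j + 6 by ring] at this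
    rcases lt_or_ge u (F (2 * j + 2)) with hA | h1
    · -- range A
      have l : S (u + F (2 * j + 4)) = S u := by rw [Nat.add_comm]; exact SL1j1 u hA
      rw [l]
      exact iff_of_false (by simp) (by omega)
    rcases lt_or_ge u (F (2 * j + 3)) with hB | h2
    · -- range B
      obtain ⟨v, rfl⟩ := Nat.exists_eq_add_of_le h1
      have hv : v < F (2 * j) := by omega
      have hSu : S (F (2 * j + 2) + v) = S v := SL1 j v hv
      have e : F (2 * j + 2) + v + F (2 * j + 4) = F (2 * j + 5) + v := by omega
      have hSt : S (F (2 * j + 2) + v + F (2 * j + 4)) = S v := by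
        rw [e]; exact SL2j1 v (by omega)
      rw [hSt, hSu]
      exact iff_of_false (by simp) (by omega)
    rcases lt_or_ge u (F (2 * j + 4)) with hC | h3'
    · -- range C
      obtain ⟨v, rfl⟩ := Nat.exists_eq_add_of_le h2
      have hv : v < F (2 * j + 2) := by omega
      have hSu : S (F (2 * j + 3) + v) = S v := SL2 j v hv
      rcases lt_or_ge v (F (2 * j + 1)) with hC1 | hC2
      · -- C1
        have e : F (2 * j + 3) + v + F (2 * j + 4) = F (2 * j + 5) + (F (2 * j) + v) := by omega
        have hSt : S (F (2 * j + 3) + v + F (2 * j + 4)) = S (F (2 * j) + v) := by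
          rw [e]; exact SL2j1 _ (by omega)
        rw [hSt, hSu]
        have hcomm : S (F (2 * j) + v) = S (v + F (2 * j)) := by rw [Nat.add_comm]
        rw [hcomm, ihj v hv]
        omega
      · -- C2
        obtain ⟨v', rfl⟩ := Nat.exists_eq_add_of_le hC2
        have hv' : v' < F (2 * j) := by omega
        have hSv : S (F (2 * j + 1) + v') = S v' := SL2' j v' hv'
        have e : F (2 * j + 3) + (F (2 * j + 1) + v') + F (2 * j + 4)
            = F (2 * j + 5) + (F (2 * j + 2) + v') := by omega
        have hSt : S (F (2 * j + 3) + (F (2 * j + 1) + v') + F (2 * j + 4)) = S v' := by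
          rw [e, SL2j1 _ (by omega)]
          exact SL1 j v' hv'
        rw [hSt, hSu, hSv]
        exact iff_of_false (by simp) (by omega)
    rcases lt_or_ge u (F (2 * j + 5)) with hDD | h4'
    · -- range D
      obtain ⟨v, rfl⟩ := Nat.exists_eq_add_of_le h3'
      have hv : v < F (2 * j + 2) := by omega
      have hSu : S (F (2 * j + 4) + v) = S v := SL1j1 v hv
      have e : F (2 * j + 4) + v + F (2 * j + 4) = F (2 * j + 5) + (F (2 * j + 3) + v) := by omega
      have hSt : S (F (2 * j + 4) + v + F (2 * j + 4)) = S v := by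
        rw [e, SL2j1 _ (by omega)]
        exact SL2 j v hv
      rw [hSt, hSu]
      exact iff_of_false (by simp) (by omega)
    · -- range E
      obtain ⟨v, rfl⟩ := Nat.exists_eq_add_of_le h4'
      have hv : v < F (2 * j + 4) := by omega
      have hSu : S (F (2 * j + 5) + v) = S v := SL2j1 v hv
      have e : F (2 * j + 5) + v + F (2 * j + 4) = F (2 * j + 6) + v := by omega
      have hSt : S (F (2 * j + 5) + v + F (2 * j + 4)) = S v := by
        rw [e]; exact SL1j2 v hv
      rw [hSt, hSu]
      exact iff_of_false (by simp) (by omega)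


lemma Xlem (j L : ℕ) (hL : L < F (2 * j + 5)) :
    S (L + F (2 * j + 3)) ≠ S L ↔
      (L + 1 = D (j + 2) ∨ L = D (j + 2) ∨
       L + 1 = D (j + 2) + F (2 * j + 2) ∨ L = D (j + 2) + F (2 * j + 2)) := by
  have hD : D (j + 2) = F (2 * j + 3) + D j := by
    show F (2 * (j + 1)) + (F (2 * j) + D j) = _
    rw [Fo j, show 2 * (j + 1) = 2 * j + 2 by ring]; ring
  have h23 : F (2 * j + 2) = F (2 * j) + F (2 * j + 1) := Fe j
  have h3 : F (2 * j + 3) = F (2 * j) + F (2 * j + 2) := Fo j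
  have h4 : F (2 * j + 4) = F (2 * j + 2) + F (2 * j + 3) := by
    have := Fe (j + 1)
    rwa [show 2 * (j + 1) + 2 = 2 * j + 4 by ring, show 2 * (j + 1) + 1 = 2 * j + 3 by ring,
      show 2 * (j + 1) = 2 * j + 2 by ring] at this
  have h5 : F (2 * j + 5) = F (2 * j + 2) + F (2 * j + 4) := by
    have := Fo (j + 1)
    rwa [show 2 * (j + 1) + 3 = 2 * j + 5 by ring, show 2 * (j + 1) + 2 = 2 * j + 4 by ring,
      show 2 * (j + 1) = 2 * j + 2 by ring] at this
  have hdp := D_pos j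
  have hdlt := D_lt_F j
  have hp0 := F_pos (2 * j)
  have hp1 := F_pos (2 * j + 1)
  have hp2 := F_pos (2 * j + 2)
  have SL1j1 : ∀ z, z < F (2 * j + 2) → S (F (2 * j + 4) + z) = S z := by
    intro z hz
    have := SL1 (j + 1) z (by rwa [show 2 * (j + 1) = 2 * j + 2 by ring])
    rwa [show 2 * (j + 1) + 2 = 2 * j + 4 by ring] at this
  have SL2j1 : ∀ z, z < F (2 * j + 4) → S (F (2 * j + 5) + z) = S z := by
    intro z hz
    have := SL2 (j + 1) z (by rwa [show 2 * (j + 1) + 2 = 2 * j + 4 by ring])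
    rwa [show 2 * (j + 1) + 3 = 2 * j + 5 by ring] at this
  rcases lt_or_ge L (F (2 * j + 2)) with hA | h1
  · have l : S (L + F (2 * j + 3)) = S L := by rw [Nat.add_comm]; exact SL2 j L hA
    rw [l]
    exact iff_of_false (by simp) (by omega)
  rcases lt_or_ge L (F (2 * j + 3)) with hB | h2
  · obtain ⟨v, rfl⟩ := Nat.exists_eq_add_of_le h1
    have hv : v < F (2 * j) := by omega
    have hSu : S (F (2 * j + 2) + v) = S v := SL1 j v hv
    have e : F (2 * j + 2) + v + F (2 * j + 3) = F (2 * j + 4) + v := by omega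
    have hSt : S (F (2 * j + 2) + v + F (2 * j + 3)) = S v := by
      rw [e]; exact SL1j1 v (by omega)
    rw [hSt, hSu]
    exact iff_of_false (by simp) (by omega)
  rcases lt_or_ge L (F (2 * j + 4)) with hC | h3'
  · obtain ⟨u, rfl⟩ := Nat.exists_eq_add_of_le h2
    have hu : u < F (2 * j + 2) := by omega
    have hSu : S (F (2 * j + 3) + u) = S u := SL2 j u hu
    rcases lt_or_ge u (F (2 * j + 1)) with hC1 | hC2
    · have e : F (2 * j + 3) + u + F (2 * j + 3) = F (2 * j + 4) + (F (2 * j) + u) := by omega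
      have hSt : S (F (2 * j + 3) + u + F (2 * j + 3)) = S (F (2 * j) + u) := by
        rw [e]; exact SL1j1 _ (by omega)
      rw [hSt, hSu, show F (2 * j) + u = u + F (2 * j) by ring, Zlem j u hu]
      omega
    · obtain ⟨u', rfl⟩ := Nat.exists_eq_add_of_le hC2
      have hu' : u' < F (2 * j) := by omega
      have hSv : S (F (2 * j + 1) + u') = S u' := SL2' j u' hu'
      have e : F (2 * j + 3) + (F (2 * j + 1) + u') + F (2 * j + 3)
          = F (2 * j + 5) + u' := by omega
      have hSt : S (F (2 * j + 3) + (F (2 * j + 1) + u') + F (2 * j + 3)) = S u' := by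
        rw [e]; exact SL2j1 u' (by omega)
      rw [hSt, hSu, hSv]
      exact iff_of_false (by simp) (by omega)
  · obtain ⟨u, rfl⟩ := Nat.exists_eq_add_of_le h3'
    have hu : u < F (2 * j + 2) := by omega
    have hSu : S (F (2 * j + 4) + u) = S u := SL1j1 u hu
    have e : F (2 * j + 4) + u + F (2 * j + 3) = F (2 * j + 5) + (F (2 * j) + u) := by omega
    have hSt : S (F (2 * j + 4) + u + F (2 * j + 3)) = S (F (2 * j) + u) := by
      rw [e]; exact SL2j1 _ (by omega)
    rw [hSt, hSu, show F (2 * j) + u = u + F (2 * j) by ring, Zlem j u hu]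
    omega



lemma SumBound (b : ℕ → ℕ) (h1 : ∀ i, b i ≤ 1) (h2 : ∀ i, b i * b (i+1) = 0)
    (h3 : ∀ i, Even i → b i * b (i+2) = 0) :
    ∀ t, (∑ i ∈ Finset.range t, b i * F i) < F t := by
  intro t
  induction t using Nat.strong_induction_on with
  | _ t ih =>
  match t with
  | 0 => simpa using Nat.lt_of_succ_le (F_pos 0)
  | (u+1) =>
    have hau := h1 u
    rw [Finset.sum_range_succ]
    rcases Nat.lt_or_ge (b u) 1 with h | h
    · have ha0 : b u = 0 := by omega
      have hihu := ih u (by omega)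
      have := F_lt_succ u
      rw [ha0]
      omega
    · have ha1 : b u = 1 := by omega
      rcases Nat.even_or_odd' u with ⟨m, hm | hm⟩
      · subst hm
        cases m with
        | zero =>
          have e0 : F 0 = 1 := F0'
          have e1 : F 1 = 2 := F1
          simp only [show 2 * 0 = 0 by ring] at ha1 ⊢
          simp [ha1, e0, e1]
        | succ i =>
          have hz1 : b (2*i+1) = 0 := by
            have hp := h2 (2*i+1)
            have : (2*i+1)+1 = 2*(i+1) := by ring
            rw [this] at hp
            rcases Nat.mul_eq_zero.mp hp with h' | h'
            · exact h'
            · rw [h'] at ha1; omega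
          have hz0 : b (2*i) = 0 := by
            have hp := h3 (2*i) (even_two_mul i)
            have : (2*i)+2 = 2*(i+1) := by ring
            rw [this] at hp
            rcases Nat.mul_eq_zero.mp hp with h' | h'
            · exact h'
            · rw [h'] at ha1; omega
          have hihu := ih (2*i) (by omega)
          have hsum : ∑ x ∈ Finset.range (2*(i+1)), b x * F x
              = ∑ x ∈ Finset.range (2*i), b x * F x := by
            rw [show 2*(i+1) = (2*i)+1+1 by ring, Finset.sum_range_succ, Finset.sum_range_succ,
              hz0, hz1]
            ring
          rw [hsum, ha1]
          have hFo : F (2*i+3) = F (2*i) + F (2*i+2) := Fo i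
          rw [show 2*(i+1)+1 = 2*i+3 by ring, show 2*(i+1) = 2*i+2 by ring]
          omega
      · subst hm
        have hz0 : b (2*m) = 0 := by
          have hp := h2 (2*m)
          rcases Nat.mul_eq_zero.mp hp with h' | h'
          · exact h'
          · rw [h'] at ha1; omega
        have hihu := ih (2*m) (by omega)
        have hsum : ∑ x ∈ Finset.range (2*m+1), b x * F x
            = ∑ x ∈ Finset.range (2*m), b x * F x := by
          rw [Finset.sum_range_succ, hz0]; ring
        rw [hsum, ha1]
        have hFe : F (2*m+2) = F (2*m) + F (2*m+1) := Fe m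
        rw [show 2*m+1+1 = 2*m+2 by ring]
        omega

lemma rep_zero (b : ℕ → ℕ) (hrep : IsFRep F 0 b) : ∀ i, b i = 0 := by
  obtain ⟨h1, h2, h3, N, hN, hsum⟩ := hrep
  intro i
  rcases lt_or_ge i N with h | h
  · have hall := (Finset.sum_eq_zero_iff).mp hsum.symm
    have := hall i (Finset.mem_range.mpr h)
    have := F_pos i
    rcases Nat.mul_eq_zero.mp ‹b i * F i = 0› with h' | h'
    · exact h'
    · omega
  · exact hN i h

lemma rep_top (n : ℕ) (b : ℕ → ℕ) (hrep : IsFRep F n b) (hn : 0 < n) :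
    ∃ t, b t = 1 ∧ (∀ i, t < i → b i = 0) ∧ F t ≤ n ∧ n < F (t+1) ∧
      n = F t + ∑ i ∈ Finset.range t, b i * F i := by
  obtain ⟨h1, h2, h3, N, hN, hsum⟩ := hrep
  have hTne : ((Finset.range N).filter (fun i => b i = 1)).Nonempty := by
    by_contra h
    rw [Finset.not_nonempty_iff_eq_empty] at h
    have : n = 0 := by
      rw [hsum]
      apply Finset.sum_eq_zero
      intro i hi
      have hbi : b i ≠ 1 := by
        intro hb1
        have hmem : i ∈ (Finset.range N).filter (fun i => b i = 1) :=
          Finset.mem_filter.mpr ⟨hi, hb1⟩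
        rw [h] at hmem
        simp at hmem
      have := h1 i
      have : b i = 0 := by omega
      simp [this]
    omega
  set T := (Finset.range N).filter (fun i => b i = 1) with hT
  set t := T.max' hTne with htdef
  have htT : t ∈ T := T.max'_mem hTne
  have hbt : b t = 1 := (Finset.mem_filter.mp htT).2
  have htN : t < N := Finset.mem_range.mp (Finset.mem_filter.mp htT).1
  have htz : ∀ i, t < i → b i = 0 := by
    intro i hi
    rcases lt_or_ge i N with h | h
    · by_contra hne
      have hbi : b i = 1 := by have := h1 i; omega
      have hmem : i ∈ T := Finset.mem_filter.mpr ⟨Finset.mem_range.mpr h, hbi⟩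
      have := T.le_max' i hmem
      omega
    · exact hN i h
  have hsum2 : n = ∑ i ∈ Finset.range (t+1), b i * F i := by
    rw [hsum]
    refine (Finset.sum_subset (Finset.range_subset_range.mpr (by omega)) ?_).symm
    intro i hi hni
    have hti : t < i := by
      simp only [Finset.mem_range] at hni
      omega
    rw [htz i hti]
    ring
  have hlt : n < F (t+1) := by rw [hsum2]; exact SumBound b h1 h2 h3 (t+1)
  have hsplit : n = F t + ∑ i ∈ Finset.range t, b i * F i := by
    rw [hsum2, Finset.sum_range_succ, hbt]
    ring
  exact ⟨t, hbt, htz, by omega, hlt, hsplit⟩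

lemma rep_strip (b : ℕ → ℕ) (t : ℕ) (h1 : ∀ i, b i ≤ 1) (h2 : ∀ i, b i * b (i+1) = 0)
    (h3 : ∀ i, Even i → b i * b (i+2) = 0) (htz : ∀ i, t < i → b i = 0) :
    IsFRep F (∑ i ∈ Finset.range t, b i * F i) (Function.update b t 0) := by
  have hble : ∀ i, Function.update b t 0 i ≤ b i := by
    intro i
    rcases eq_or_ne i t with rfl | h
    · simp
    · rw [Function.update_of_ne h]
  refine ⟨?_, ?_, ?_, t+1, ?_, ?_⟩
  · intro i; exact le_trans (hble i) (h1 i)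
  · intro i
    have := h2 i
    rcases Nat.mul_eq_zero.mp this with h' | h'
    · have := hble i; rw [Nat.mul_eq_zero]; left; omega
    · have := hble (i+1); rw [Nat.mul_eq_zero]; right; omega
  · intro i hi
    have := h3 i hi
    rcases Nat.mul_eq_zero.mp this with h' | h'
    · have := hble i; rw [Nat.mul_eq_zero]; left; omega
    · have := hble (i+2); rw [Nat.mul_eq_zero]; right; omega
  · intro i hi
    rcases eq_or_ne i t with rfl | h
    · simp
    · rw [Function.update_of_ne h]; exact htz i (by omega)
  · have step1 : ∑ i ∈ Finset.range t, Function.update b t 0 i * F i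
        = ∑ i ∈ Finset.range (t+1), Function.update b t 0 i * F i := by
      rw [Finset.sum_range_succ]
      simp
    have step2 : ∑ i ∈ Finset.range t, b i * F i
        = ∑ i ∈ Finset.range t, Function.update b t 0 i * F i := by
      apply Finset.sum_congr rfl
      intro i hi
      rw [Function.update_of_ne (by simp at hi; omega)]
    rw [step2, step1]

lemma rep_unique : ∀ n b c, IsFRep F n b → IsFRep F n c → ∀ i, b i = c i := by
  intro n
  induction n using Nat.strong_induction_on with
  | _ n ih =>
  intro b c hb hc i
  rcases Nat.eq_zero_or_pos n with rfl | hn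
  · rw [rep_zero b hb i, rep_zero c hc i]
  · obtain ⟨tb, hbt, hbz, hbge, hblt, hbsplit⟩ := rep_top n b hb hn
    obtain ⟨tc, hct, hcz, hcge, hclt, hcsplit⟩ := rep_top n c hc hn
    have hteq : tb = tc := by
      rcases lt_trichotomy tb tc with h | h | h
      · have := F_strictMono.monotone (show tb+1 ≤ tc by omega); omega
      · exact h
      · have := F_strictMono.monotone (show tc+1 ≤ tb by omega); omega
    subst hteq
    obtain ⟨hb1, hb2, hb3, _⟩ := hb
    obtain ⟨hc1, hc2, hc3, _⟩ := hc
    have hrb := rep_strip b tb hb1 hb2 hb3 hbz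
    have hrc := rep_strip c tb hc1 hc2 hc3 hcz
    have hseq : ∑ i ∈ Finset.range tb, c i * F i = ∑ i ∈ Finset.range tb, b i * F i := by
      omega
    rw [hseq] at hrc
    have hlt : ∑ i ∈ Finset.range tb, b i * F i < n := by
      have := F_pos tb; omega
    have hupd := ih _ hlt _ _ hrb hrc
    rcases eq_or_ne i tb with rfl | h
    · rw [hbt, hct]
    · have := hupd i
      rwa [Function.update_of_ne h, Function.update_of_ne h] at this

end Aux

theorem shift_odd_neq_iff (f : ℕ → ℕ) (hf : IsFSeq f) (s : ℕ → ℕ) (hs : IsFixedSeq s) (a : ℕ → ℕ → ℕ) (ha : ∀ n, IsFRep f n (a n)) :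
    ∀ n k : ℕ, 1 ≤ k →
      (s (n + f (2*k+1)) ≠ s n ↔
        (Phi f a k n = f (2*k+3) / 2 ∨ Phi f a k n = f (2*k+3) / 2 - 1 ∨
         Phi f a k n = f (2*k+3) / 2 + f (2*k) ∨
         Phi f a k n = f (2*k+3) / 2 + f (2*k) - 1)) := by
  obtain ⟨hf0, hf1, hfe, hfo⟩ := hf
  have hp : ∀ m, f (2*m) = Aux.F (2*m) ∧ f (2*m+1) = Aux.F (2*m+1) := by
    intro m
    induction m with
    | zero =>
      constructor
      · rw [show 2*0 = 0 by ring, hf0, Aux.F0']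
      · rw [show 2*0+1 = 1 by ring, hf1, Aux.F1]
    | succ i ih =>
      obtain ⟨ih0, ih1⟩ := ih
      constructor
      · rw [show 2*(i+1) = 2*i+2 by ring, hfe i, ih0, ih1, Aux.Fe i]
      · rw [show 2*(i+1)+1 = 2*i+3 by ring, hfo i, hfe i, ih0, ih1, Aux.Fo i, Aux.Fe i]
  have hfF : f = Aux.F := by
    funext i
    rcases Nat.even_or_odd' i with ⟨m, rfl | rfl⟩
    · exact (hp m).1
    · exact (hp m).2
  subst hfF
  have hsS : s = Aux.S := by
    funext x
    have hlen : x < (tauIter (x+1)).length := by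
      rw [Aux.Wlen]
      have := Aux.F_ge (2*(x+1))
      omega
    exact hs (x+1) x hlen
  subst hsS
  intro n k hk
  obtain ⟨j, rfl⟩ : ∃ j, k = j + 1 := ⟨k - 1, by omega⟩
  simp only [Phi]
  rw [show 2*(j+1)+1 = 2*j+3 by ring, show 2*(j+1)+3 = 2*j+5 by ring,
    show 2*(j+1) = 2*j+2 by ring]
  have hdiv : Aux.F (2*j+5) / 2 = Aux.D (j+2) := by
    have h := Aux.two_D (j+2)
    rw [show 2*(j+2)+1 = 2*j+5 by ring] at h
    omega
  rw [hdiv]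
  have hDj2 : Aux.D (j+2) = Aux.F (2*j+3) + Aux.D j := by
    show Aux.F (2*(j+1)) + (Aux.F (2*j) + Aux.D j) = _
    rw [Aux.Fo j, show 2*(j+1) = 2*j+2 by ring]; ring
  have hdpj := Aux.D_pos j
  induction n using Nat.strong_induction_on with
  | _ n ih =>
  obtain ⟨h1a, h2a, h3a, N, hN, hsum⟩ := ha n
  rcases lt_or_ge n (Aux.F (2*j+5)) with hlt | hge
  · -- small case
    have hz : ∀ i, 2*j+5 ≤ i → a n i = 0 := by
      intro i hi
      by_contra hne
      have hai : a n i = 1 := by have := h1a i; omega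
      have hiN : i < N := by
        by_contra h'
        push_neg at h'
        rw [hN i h'] at hai
        omega
      have hterm : Aux.F i ≤ n := by
        calc Aux.F i = a n i * Aux.F i := by rw [hai]; ring
        _ ≤ ∑ i ∈ Finset.range N, a n i * Aux.F i :=
            Finset.single_le_sum (f := fun i => a n i * Aux.F i)
              (fun _ _ => Nat.zero_le _) (Finset.mem_range.mpr hiN)
        _ = n := hsum.symm
      have := Aux.F_strictMono.monotone hi
      omega
    have hPhi : ∑ i ∈ Finset.range (2*j+5), a n i * Aux.F i = n := by
      conv_rhs => rw [hsum]
      rcases le_or_gt N (2*j+5) with h | h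
      · refine (Finset.sum_subset (Finset.range_subset_range.mpr h) ?_).symm
        intro i hi hni
        simp only [Finset.mem_range] at hni
        rw [hN i (by omega)]
        ring
      · refine Finset.sum_subset (Finset.range_subset_range.mpr (by omega)) ?_
        intro i hi hni
        simp only [Finset.mem_range] at hni
        rw [hz i (by omega)]
        ring
    rw [hPhi, Aux.Xlem j n hlt]
    have := Aux.D_pos (j+2)
    have := Aux.F_pos (2*j+2)
    omega
  · -- large case: strip top digit
    have hn0 : 0 < n := lt_of_lt_of_le (Aux.F_pos _) hge
    obtain ⟨t, hat, htz, hFt, hFt1, hsplit0⟩ := Aux.rep_top n (a n) (ha n) hn0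
    obtain ⟨r, hnr, hrsum0⟩ :
        ∃ r, n = Aux.F t + r ∧ r = ∑ i ∈ Finset.range t, a n i * Aux.F i :=
      ⟨_, hsplit0, rfl⟩
    have htge : 2*j+5 ≤ t := by
      by_contra h'
      push_neg at h'
      have := Aux.F_strictMono.monotone (show t+1 ≤ 2*j+5 by omega)
      omega
    have hstrip := Aux.rep_strip (a n) t h1a h2a h3a htz
    rw [← hrsum0] at hstrip
    have hreq : ∀ i, i < t → a r i = a n i := by
      intro i hi
      have h := Aux.rep_unique r (a r) (Function.update (a n) t 0) (ha r) hstrip i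
      rwa [Function.update_of_ne (by omega)] at h
    have hPhiEq : ∑ i ∈ Finset.range (2*j+5), a r i * Aux.F i
        = ∑ i ∈ Finset.range (2*j+5), a n i * Aux.F i := by
      refine Finset.sum_congr rfl ?_
      intro i hi
      simp only [Finset.mem_range] at hi
      rw [hreq i (by omega)]
    have hrn : r < n := by have := Aux.F_pos t; omega
    have hkey : Aux.S n = Aux.S r ∧
        Aux.S (n + Aux.F (2*j+3)) = Aux.S (r + Aux.F (2*j+3)) := by
      rcases Nat.even_or_odd' t with ⟨m, rfl | rfl⟩
      · -- t = 2*m even; m ≥ j+3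
        obtain ⟨M, rfl⟩ : ∃ M, m = M+1 := ⟨m-1, by omega⟩
        have hz1 : a n (2*M+1) = 0 := by
          have hp2 := h2a (2*M+1)
          rw [show 2*M+1+1 = 2*(M+1) by ring] at hp2
          rcases Nat.mul_eq_zero.mp hp2 with h' | h'
          · exact h'
          · rw [h'] at hat; omega
        have hz0 : a n (2*M) = 0 := by
          have hp3 := h3a (2*M) (even_two_mul M)
          rw [show 2*M+2 = 2*(M+1) by ring] at hp3
          rcases Nat.mul_eq_zero.mp hp3 with h' | h'
          · exact h'
          · rw [h'] at hat; omega
        have hrsum : r = ∑ i ∈ Finset.range (2*M), a n i * Aux.F i := by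
          rw [hrsum0, show 2*(M+1) = 2*M+1+1 by ring, Finset.sum_range_succ,
            Finset.sum_range_succ, hz0, hz1]
          ring
        have hrb : r < Aux.F (2*M) := by
          rw [hrsum]; exact Aux.SumBound (a n) h1a h2a h3a (2*M)
        have hDM : Aux.D (M+1) = Aux.F (2*M) + Aux.D M := rfl
        have hDbound : Aux.F (2*j+3) + 1 ≤ Aux.D M := by
          have hmono := Aux.D_mono (show j+2 ≤ M by omega)
          omega
        have hne : n = Aux.F (2*M+2) + r := by
          rw [show 2*M+2 = 2*(M+1) by ring]; exact hnr
        constructor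
        · rw [hne]; exact Aux.Strip_even M r (by omega)
        · rw [show n + Aux.F (2*j+3) = Aux.F (2*M+2) + (r + Aux.F (2*j+3)) by omega]
          exact Aux.Strip_even M _ (by omega)
      · -- t = 2*m+1 odd; m ≥ j+2
        have hz0 : a n (2*m) = 0 := by
          have hp2 := h2a (2*m)
          rcases Nat.mul_eq_zero.mp hp2 with h' | h'
          · exact h'
          · rw [h'] at hat; omega
        have hrsum : r = ∑ i ∈ Finset.range (2*m), a n i * Aux.F i := by
          rw [hrsum0, Finset.sum_range_succ, hz0]
          ring
        have hrb : r < Aux.F (2*m) := by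
          rw [hrsum]; exact Aux.SumBound (a n) h1a h2a h3a (2*m)
        have hDm : Aux.D (m+1) = Aux.F (2*m) + Aux.D m := rfl
        have hDbound : Aux.F (2*j+3) + 1 ≤ Aux.D m := by
          have hmono := Aux.D_mono (show j+2 ≤ m by omega)
          omega
        constructor
        · rw [hnr]; exact Aux.Strip_odd m r (by omega)
        · rw [show n + Aux.F (2*j+3) = Aux.F (2*m+1) + (r + Aux.F (2*j+3)) by omega]
          exact Aux.Strip_odd m _ (by omega)
    obtain ⟨k1, k2⟩ := hkey
    rw [k2, k1, ← hPhiEq]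
    exact ih r hrn
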